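/- arXiv:2401.00807 — 2 statements merged into one kernel-verified Lean document; each statement's English description precedes it below -/
import Mathlib

section
/- For every odd integer k ≥ 13, there exists an ascending partition P of n = 3k of size k such that slack_j(P) ≥ 0 for all 1 ≤ j ≤ k − 1 and P is not equitable. -/
/-- `s^{n,k} = n(n+1)/(2k)`. -/
def sNK (n k : ℕ) : ℕ := n * (n + 1) / (2 * k)

/-- `slack_j(P) = Σ_{i=1}^{p_1+⋯+p_j} (n − i + 1) − j·s^{n,k}`. -/
def slack (n k : ℕ) (p : ℕ → ℕ) (j : ℕ) : ℤ :=
  (∑ i ∈ Finset.Icc 1 (∑ t ∈ Finset.Icc 1 j, p t), ((n : ℤ) - (i : ℤ) + 1))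
    - (j : ℤ) * (sNK n k : ℤ)

/-- `p` (on indices `1,…,k`) is an ascending partition of `n` of size `k`. -/
def IsAscPartition (n k : ℕ) (p : ℕ → ℕ) : Prop :=
  (∀ i, 1 ≤ i → i ≤ k → 1 ≤ p i) ∧
  (∀ i j, 1 ≤ i → i ≤ j → j ≤ k → p i ≤ p j) ∧
  ∑ i ∈ Finset.Icc 1 k, p i = n

/-- `p` is equitable: `{1,…,n}` partitions into sets `A_1,…,A_k` with `|A_i| = p_i`
and each element sum equal to `s^{n,k}`. -/
def Equitable (n k : ℕ) (p : ℕ → ℕ) : Prop :=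
  ∃ A : ℕ → Finset ℕ,
    (∀ i j, 1 ≤ i → i < j → j ≤ k → Disjoint (A i) (A j)) ∧
    (Finset.Icc 1 k).biUnion A = Finset.Icc 1 n ∧
    (∀ i, 1 ≤ i → i ≤ k → (A i).card = p i) ∧
    (∀ i, 1 ≤ i → i ≤ k → ∑ x ∈ A i, x = sNK n k)

lemma gauss_sum (n S : ℕ) :
    (∑ i ∈ Finset.Icc 1 S, ((n : ℤ) - (i : ℤ) + 1)) * 2 = S * (2 * n + 1 - S) := by
  induction S with
  | zero => simp
  | succ S ih =>
    rw [Finset.sum_Icc_succ_top (by omega : 1 ≤ S + 1)]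
    push_cast
    push_cast at ih
    linear_combination ih

lemma sum_Icc_split (p : ℕ → ℕ) (c j v : ℕ) (hcj : c ≤ j)
    (hv : ∀ i, c < i → i ≤ j → p i = v) :
    ∑ i ∈ Finset.Icc 1 j, p i = (∑ i ∈ Finset.Icc 1 c, p i) + (j - c) * v := by
  have h1 : ∀ b : ℕ, Finset.Icc 1 b = Finset.Ioc 0 b := by
    intro b; rfl
  rw [h1, h1, ← Finset.sum_Ioc_consecutive _ (Nat.zero_le c) hcj]
  congr 1
  rw [Finset.sum_congr rfl (fun i hi => hv i (Finset.mem_Ioc.mp hi).1 (Finset.mem_Ioc.mp hi).2),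
    Finset.sum_const, Nat.card_Ioc]
  simp [mul_comm]

lemma reg1 (U Ez J : ℤ) (hu : 3 ≤ U) (he0 : 0 ≤ Ez) (he : Ez ≤ 1) (hj : 1 ≤ J)
    (h : J ≤ 3 * U + Ez) :
    2 * J * (18 * U + 6 + 9 * Ez) ≤ (2 * J) * (2 * (3 * (4 * U + 1 + 2 * Ez)) + 1 - 2 * J) := by
  nlinarith [mul_nonneg (by linarith : (0:ℤ) ≤ J) (by linarith : (0:ℤ) ≤ 3 * U + Ez - J),
    mul_nonneg (by linarith : (0:ℤ) ≤ J) he0]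

lemma reg2 (U Ez J S : ℤ) (hu : 3 ≤ U) (he0 : 0 ≤ Ez) (he : Ez ≤ 1)
    (hS : S + (3 * U + Ez) = 3 * J) (h1 : 3 * U + Ez + 1 ≤ J) (h2 : J ≤ 3 * U + 2 + 2 * Ez) :
    2 * J * (18 * U + 6 + 9 * Ez) ≤ S * (2 * (3 * (4 * U + 1 + 2 * Ez)) + 1 - S) := by
  rcases (by omega : Ez = 0 ∨ Ez = 1) with rfl | rfl <;>
  nlinarith [mul_nonneg (by linarith : (0:ℤ) ≤ J - (3 * U + 1))
      (by linarith : (0:ℤ) ≤ 3 * U + 4 - J),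
    mul_nonneg (mul_nonneg (by linarith : (0:ℤ) ≤ J - (3 * U + 1))
      (by linarith : (0:ℤ) ≤ 3 * U + 4 - J)) (by linarith : (0:ℤ) ≤ U)]

lemma reg3 (U Ez J S : ℤ) (hu : 3 ≤ U) (he0 : 0 ≤ Ez) (he : Ez ≤ 1)
    (hS : S + (12 * U + 6 + 7 * Ez) = 6 * J) (h1 : 3 * U + 3 + 2 * Ez ≤ J)
    (h2 : J ≤ 4 * U + 2 * Ez) :
    2 * J * (18 * U + 6 + 9 * Ez) ≤ S * (2 * (3 * (4 * U + 1 + 2 * Ez)) + 1 - S) := by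
  rcases (by omega : Ez = 0 ∨ Ez = 1) with rfl | rfl <;>
  nlinarith [mul_nonneg (by linarith : (0:ℤ) ≤ J - (3 * U + 3))
      (by linarith : (0:ℤ) ≤ 4 * U + 2 - J),
    mul_nonneg (by linarith : (0:ℤ) ≤ U - 3) (by linarith : (0:ℤ) ≤ J - (3 * U + 3)),
    mul_nonneg (by linarith : (0:ℤ) ≤ U - 3) (by linarith : (0:ℤ) ≤ 4 * U + 2 - J)]

set_option maxHeartbeats 1000000 in
theorem statement15 (k : ℕ) (hk : Odd k) (hk13 : 13 ≤ k) :
    ∃ p : ℕ → ℕ,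
      IsAscPartition (3 * k) k p ∧
      (∀ j, 1 ≤ j → j ≤ k - 1 → 0 ≤ slack (3 * k) k p j) ∧
      ¬ Equitable (3 * k) k p := by
  obtain ⟨m, hm⟩ := hk
  obtain ⟨u, e, he, hu, hke⟩ : ∃ u e, e ≤ 1 ∧ 3 ≤ u ∧ k = 4 * u + 1 + 2 * e := by
    rcases Nat.even_or_odd m with ⟨v, hv⟩ | ⟨v, hv⟩
    · exact ⟨v, 0, by omega, by omega, by omega⟩
    · exact ⟨v, 1, by omega, by omega, by omega⟩
  clear hm hk13
  subst hke
  set p : ℕ → ℕ := fun i =>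
    if i ≤ 3 * u + e then 2 else if i ≤ 3 * u + 2 + 2 * e then 3
    else if i ≤ 4 * u + 2 * e then 6 else 9 + e with hp
  have hp2 : ∀ i, i ≤ 3 * u + e → p i = 2 := by
    intro i h; simp only [hp]; rw [if_pos (by omega)]
  have hp3 : ∀ i, 3 * u + e < i → i ≤ 3 * u + 2 + 2 * e → p i = 3 := by
    intro i h1 h2; simp only [hp]; rw [if_neg (by omega), if_pos (by omega)]
  have hp6 : ∀ i, 3 * u + 2 + 2 * e < i → i ≤ 4 * u + 2 * e → p i = 6 := by
    intro i h1 h2; simp only [hp]; rw [if_neg (by omega), if_neg (by omega), if_pos (by omega)]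
  have hpz : ∀ i, 4 * u + 2 * e < i → p i = 9 + e := by
    intro i h1; simp only [hp]; rw [if_neg (by omega), if_neg (by omega), if_neg (by omega)]
  have hs : sNK (3 * (4 * u + 1 + 2 * e)) (4 * u + 1 + 2 * e) = 18 * u + 6 + 9 * e := by
    unfold sNK
    rw [show 3 * (4 * u + 1 + 2 * e) * (3 * (4 * u + 1 + 2 * e) + 1)
        = (18 * u + 6 + 9 * e) * (2 * (4 * u + 1 + 2 * e)) by ring]
    exact Nat.mul_div_cancel _ (by omega)
  have hS1 : ∀ j, j ≤ 3 * u + e → ∑ i ∈ Finset.Icc 1 j, p i = 2 * j := by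
    intro j hj
    have h := sum_Icc_split p 0 j 2 (by omega) (fun i h1 h2 => hp2 i (le_trans h2 hj))
    rw [Finset.Icc_eq_empty (by omega : ¬(1:ℕ) ≤ 0), Finset.sum_empty] at h
    omega
  have hS2 : ∀ j, 3 * u + e ≤ j → j ≤ 3 * u + 2 + 2 * e →
      (∑ i ∈ Finset.Icc 1 j, p i) + (3 * u + e) = 3 * j := by
    intro j h1 h2
    have h := sum_Icc_split p (3 * u + e) j 3 h1 (fun i hi1 hi2 => hp3 i hi1 (le_trans hi2 h2))
    rw [hS1 (3 * u + e) le_rfl] at h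
    omega
  have hS3 : ∀ j, 3 * u + 2 + 2 * e ≤ j → j ≤ 4 * u + 2 * e →
      (∑ i ∈ Finset.Icc 1 j, p i) + (12 * u + 6 + 7 * e) = 6 * j := by
    intro j h1 h2
    have h := sum_Icc_split p (3 * u + 2 + 2 * e) j 6 h1
      (fun i hi1 hi2 => hp6 i hi1 (le_trans hi2 h2))
    have hb := hS2 (3 * u + 2 + 2 * e) (by omega) le_rfl
    omega
  have hS4 : ∑ i ∈ Finset.Icc 1 (4 * u + 1 + 2 * e), p i = 12 * u + 3 + 6 * e := by
    have h := sum_Icc_split p (4 * u + 2 * e) (4 * u + 1 + 2 * e) (9 + e) (by omega)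
      (fun i hi1 _ => hpz i hi1)
    rw [show 4 * u + 1 + 2 * e - (4 * u + 2 * e) = 1 by omega, one_mul] at h
    have hb := hS3 (4 * u + 2 * e) (by omega) le_rfl
    omega
  refine ⟨p, ⟨?_, ?_, ?_⟩, ?_, ?_⟩
  · intro i _ _; simp only [hp]; split_ifs <;> omega
  · intro i j _ hij _; simp only [hp]; split_ifs <;> omega
  · rw [hS4]; ring
  · -- slack nonnegativity
    intro j hj1 hj2
    have hg := gauss_sum (3 * (4 * u + 1 + 2 * e)) (∑ i ∈ Finset.Icc 1 j, p i)
    rw [slack, hs]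
    set S := ∑ i ∈ Finset.Icc 1 j, p i with hSdef
    have hu' : (3 : ℤ) ≤ (u : ℤ) := by exact_mod_cast hu
    have he' : (e : ℤ) ≤ 1 := by exact_mod_cast he
    have he0 : (0 : ℤ) ≤ (e : ℤ) := Int.ofNat_nonneg e
    have hj1' : (1 : ℤ) ≤ (j : ℤ) := by exact_mod_cast hj1
    have key : 2 * (j : ℤ) * ((18 * u + 6 + 9 * e : ℕ) : ℤ)
        ≤ (S : ℤ) * (2 * ((3 * (4 * u + 1 + 2 * e) : ℕ) : ℤ) + 1 - (S : ℤ)) := by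
      push_cast
      rcases (by omega : j ≤ 3 * u + e ∨ (3 * u + e < j ∧ j ≤ 3 * u + 2 + 2 * e)
          ∨ (3 * u + 2 + 2 * e < j ∧ j ≤ 4 * u + 2 * e)) with h | ⟨h1, h2⟩ | ⟨h1, h2⟩
      · have hS : S = 2 * j := hS1 j h
        have h' : (j : ℤ) ≤ 3 * (u:ℤ) + e := by exact_mod_cast h
        rw [hS]
        push_cast
        linarith [reg1 (u:ℤ) (e:ℤ) (j:ℤ) hu' he0 he' hj1' h']
      · have hS : (S : ℤ) + (3 * (u:ℤ) + e) = 3 * j := by exact_mod_cast hS2 j (by omega) h2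
        have h1' : (3 * (u:ℤ) + e + 1) ≤ (j : ℤ) := by
          exact_mod_cast (by omega : 3 * u + e + 1 ≤ j)
        have h2' : (j : ℤ) ≤ 3 * (u:ℤ) + 2 + 2 * e := by exact_mod_cast h2
        linarith [reg2 (u:ℤ) (e:ℤ) (j:ℤ) (S:ℤ) hu' he0 he' hS h1' h2']
      · have hS : (S : ℤ) + (12 * (u:ℤ) + 6 + 7 * e) = 6 * j := by
          exact_mod_cast hS3 j (by omega) h2
        have h1' : (3 * (u:ℤ) + 3 + 2 * e) ≤ (j : ℤ) := by
          exact_mod_cast (by omega : 3 * u + 3 + 2 * e ≤ j)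
        have h2' : (j : ℤ) ≤ 4 * (u:ℤ) + 2 * e := by exact_mod_cast h2
        linarith [reg3 (u:ℤ) (e:ℤ) (j:ℤ) (S:ℤ) hu' he0 he' hS h1' h2']
    linarith
  · -- non-equitability
    rintro ⟨A, hdisj, hcover, hcard, hsum⟩
    rw [hs] at hsum
    have hsub : ∀ i, 1 ≤ i → i ≤ 4 * u + 1 + 2 * e →
        A i ⊆ Finset.Icc 1 (3 * (4 * u + 1 + 2 * e)) := by
      intro i h1 h2
      rw [← hcover]
      exact Finset.subset_biUnion_of_mem A (Finset.mem_Icc.mpr ⟨h1, h2⟩)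
    set T : Finset ℕ := Finset.Icc (6 * u + 3 + 3 * e) (3 * (4 * u + 1 + 2 * e)) with hT
    have hpair : ∀ i, 1 ≤ i → i ≤ 3 * u + e → A i ∩ T = A i := by
      intro i h1 h2
      have hc2 : (A i).card = 2 := by rw [hcard i h1 (by omega)]; exact hp2 i h2
      obtain ⟨x, y, hxy, hAi⟩ := Finset.card_eq_two.mp hc2
      have hsx : x + y = 18 * u + 6 + 9 * e := by
        have h := hsum i h1 (by omega)
        rwa [hAi, Finset.sum_pair hxy] at h
      have hxn : x ∈ Finset.Icc 1 (3 * (4 * u + 1 + 2 * e)) :=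
        hsub i h1 (by omega) (by rw [hAi]; simp)
      have hyn : y ∈ Finset.Icc 1 (3 * (4 * u + 1 + 2 * e)) :=
        hsub i h1 (by omega) (by rw [hAi]; simp)
      rw [Finset.mem_Icc] at hxn hyn
      apply Finset.inter_eq_left.mpr
      rw [hAi]
      intro z hz
      rw [Finset.mem_insert, Finset.mem_singleton] at hz
      rw [hT, Finset.mem_Icc]
      rcases hz with rfl | rfl <;> omega
    have htrip : ∀ i, 3 * u + e < i → i ≤ 3 * u + 2 + 2 * e → 1 ≤ (A i ∩ T).card := by
      intro i h1 h2
      have hc3 : (A i).card = 3 := by rw [hcard i (by omega) (by omega)]; exact hp3 i h1 h2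
      obtain ⟨x, y, z, hxy, hxz, hyz, hAi⟩ := Finset.card_eq_three.mp hc3
      have hsx : x + y + z = 18 * u + 6 + 9 * e := by
        have h := hsum i (by omega) (by omega)
        rw [hAi, Finset.sum_insert (by simp [hxy, hxz]), Finset.sum_pair hyz] at h
        omega
      have hxn : x ∈ Finset.Icc 1 (3 * (4 * u + 1 + 2 * e)) :=
        hsub i (by omega) (by omega) (by rw [hAi]; simp)
      have hyn : y ∈ Finset.Icc 1 (3 * (4 * u + 1 + 2 * e)) :=
        hsub i (by omega) (by omega) (by rw [hAi]; simp)
      have hzn : z ∈ Finset.Icc 1 (3 * (4 * u + 1 + 2 * e)) :=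
        hsub i (by omega) (by omega) (by rw [hAi]; simp)
      rw [Finset.mem_Icc] at hxn hyn hzn
      have hw : ∃ w ∈ A i, 6 * u + 3 + 3 * e ≤ w ∧ w ≤ 3 * (4 * u + 1 + 2 * e) := by
        rcases (by omega : 6 * u + 3 + 3 * e ≤ x ∨ 6 * u + 3 + 3 * e ≤ y ∨
            6 * u + 3 + 3 * e ≤ z) with h | h | h
        · exact ⟨x, by rw [hAi]; simp, h, hxn.2⟩
        · exact ⟨y, by rw [hAi]; simp, h, hyn.2⟩
        · exact ⟨z, by rw [hAi]; simp, h, hzn.2⟩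
      obtain ⟨w, hw1, hw2, hw3⟩ := hw
      exact Finset.card_pos.mpr ⟨w, Finset.mem_inter.mpr ⟨hw1, Finset.mem_Icc.mpr ⟨hw2, hw3⟩⟩⟩
    have hkey : ∑ i ∈ Finset.Icc 1 (3 * u + 2 + 2 * e), (A i ∩ T).card ≤ T.card := by
      rw [← Finset.card_biUnion]
      · apply Finset.card_le_card
        intro x hx
        rw [Finset.mem_biUnion] at hx
        obtain ⟨i, _, hxi⟩ := hx
        exact (Finset.mem_inter.mp hxi).2
      · intro i hi j hj hij
        rw [Finset.mem_coe, Finset.mem_Icc] at hi hj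
        rcases Nat.lt_or_ge i j with h | h
        · exact (hdisj i j hi.1 h (by omega)).mono Finset.inter_subset_left
            Finset.inter_subset_left
        · exact ((hdisj j i hj.1 (by omega) (by omega)).symm).mono Finset.inter_subset_left
            Finset.inter_subset_left
    have hTcard : T.card = 6 * u + 1 + 3 * e := by
      rw [hT, Nat.card_Icc]; omega
    have hlow : 6 * u + 2 + 3 * e ≤ ∑ i ∈ Finset.Icc 1 (3 * u + 2 + 2 * e), (A i ∩ T).card := by
      have hsplit : Finset.Icc 1 (3 * u + 2 + 2 * e) = Finset.Ioc 0 (3 * u + 2 + 2 * e) := rfl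
      rw [hsplit, ← Finset.sum_Ioc_consecutive _ (Nat.zero_le (3 * u + e)) (by omega)]
      have hA : ∑ i ∈ Finset.Ioc 0 (3 * u + e), (A i ∩ T).card = 2 * (3 * u + e) := by
        have hconst : ∀ i ∈ Finset.Ioc 0 (3 * u + e), (A i ∩ T).card = 2 := by
          intro i hi
          rw [Finset.mem_Ioc] at hi
          rw [hpair i hi.1 hi.2, hcard i hi.1 (by omega), hp2 i hi.2]
        rw [Finset.sum_congr rfl hconst, Finset.sum_const, Nat.card_Ioc, smul_eq_mul]
        omega
      have hB : 2 + e ≤ ∑ i ∈ Finset.Ioc (3 * u + e) (3 * u + 2 + 2 * e), (A i ∩ T).card := by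
        calc 2 + e = ∑ _i ∈ Finset.Ioc (3 * u + e) (3 * u + 2 + 2 * e), 1 := by
              rw [Finset.sum_const, Nat.card_Ioc, smul_eq_mul]; omega
          _ ≤ _ := Finset.sum_le_sum (fun i hi => by
              rw [Finset.mem_Ioc] at hi; exact htrip i hi.1 hi.2)
      omega
    omega
end

section
/- For every odd integer k ≥ 21, there exists an ascending partition P of n = 3k − 1 of size k such that slack_j(P) ≥ 0 for all 1 ≤ j ≤ k − 1 and P is not equitable. -/
/-- the counterexample partition: `a` twos, `3m+3-2a` threes, sixes, one last part. -/
def pf (m a : ℕ) (j : ℕ) : ℕ :=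
  if j ≤ a then 2 else if j ≤ 3*m+3-a then 3 else if j ≤ 2*m then 6 else 3*m+11-2*a

/-- prefix sums of `pf`. -/
def Mf (m a : ℕ) (j : ℕ) : ℕ :=
  if j ≤ a then 2*j else if j ≤ 3*m+3-a then 3*j - a
  else if j ≤ 2*m then 6*j + 2*a - (9*m+9) else 6*m+2

lemma pf_sum (m a : ℕ) (h1 : 3*m ≤ 2*a) (h2 : 2*a ≤ 3*m+1) (hm : 10 ≤ m) :
    ∀ j, j ≤ 2*m+1 → ∑ t ∈ Finset.Icc 1 j, pf m a t = Mf m a j := by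
  intro j
  induction j with
  | zero => intro _; simp [Mf]
  | succ j ih =>
      intro hj
      rw [Finset.sum_Icc_succ_top (by omega), ih (by omega)]
      simp only [pf, Mf]
      split_ifs <;> omega

lemma sum_desc (n : ℕ) : ∀ M : ℕ,
    2 * (∑ i ∈ Finset.Icc 1 M, ((n:ℤ) - (i:ℤ) + 1)) = (M:ℤ) * (2*(n:ℤ) + 1 - (M:ℤ)) := by
  intro M
  induction M with
  | zero => simp
  | succ M ih =>
      rw [Finset.sum_Icc_succ_top (by omega)]
      push_cast
      push_cast at ih
      linear_combination ih

lemma sNK_val (m : ℕ) : sNK (6*m+2) (2*m+1) = 9*m+3 := by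
  show (6*m+2) * (6*m+2+1) / (2*(2*m+1)) = 9*m+3
  rw [show (6*m+2) * (6*m+2+1) = (2*(2*m+1)) * (9*m+3) from by ring]
  exact Nat.mul_div_cancel_left _ (by omega)

set_option maxHeartbeats 1000000 in
theorem statement16 (k : ℕ) (hk : Odd k) (hk21 : 21 ≤ k) :
    ∃ p : ℕ → ℕ,
      IsAscPartition (3 * k - 1) k p ∧
      (∀ j, 1 ≤ j → j ≤ k - 1 → 0 ≤ slack (3 * k - 1) k p j) ∧
      ¬ Equitable (3 * k - 1) k p := by
  obtain ⟨m, rfl⟩ := hk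
  have hm : 10 ≤ m := by omega
  set a := (3*m+1)/2 with ha
  have h1 : 3*m ≤ 2*a := by omega
  have h2 : 2*a ≤ 3*m+1 := by omega
  have hn : 3*(2*m+1) - 1 = 6*m+2 := by omega
  have hmz : (10:ℤ) ≤ (m:ℤ) := by exact_mod_cast hm
  have h1z : 3*(m:ℤ) ≤ 2*(a:ℤ) := by exact_mod_cast h1
  have h2z : 2*(a:ℤ) ≤ 3*(m:ℤ)+1 := by exact_mod_cast h2
  refine ⟨pf m a, ?_, ?_, ?_⟩
  · rw [hn]
    refine ⟨?_, ?_, ?_⟩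
    · intro i _ _; simp only [pf]; split_ifs <;> omega
    · intro i j _ hij _; simp only [pf]; split_ifs <;> omega
    · rw [pf_sum m a h1 h2 hm (2*m+1) le_rfl]
      simp only [Mf]; split_ifs <;> omega
  · intro j hj1 hj2
    rw [hn]
    unfold slack
    rw [sNK_val, pf_sum m a h1 h2 hm j (by omega)]
    have hg := sum_desc (6*m+2) (Mf m a j)
    have hj2' : j ≤ 2*m := by omega
    have hjz : 1 ≤ (j:ℤ) := by exact_mod_cast hj1
    suffices h : 2*(j:ℤ)*((9:ℤ)*(m:ℤ)+3) ≤ (Mf m a j : ℤ) * (2*((6:ℤ)*(m:ℤ)+2) + 1 - (Mf m a j : ℤ)) by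
      push_cast at hg ⊢
      nlinarith [hg]
    rcases le_or_gt j a with hc1 | hc1
    · -- M = 2j
      have hMf : Mf m a j = 2*j := by simp only [Mf]; split_ifs <;> omega
      rw [hMf]
      push_cast
      have hb2 : (0:ℤ) ≤ 6*(m:ℤ)+4-4*(j:ℤ) := by
        have : 2*j ≤ 3*m+1 := by omega
        push_cast at this ⊢; linarith
      nlinarith [mul_nonneg (by linarith : (0:ℤ) ≤ (j:ℤ)) hb2]
    rcases le_or_gt j (3*m+3-a) with hc2 | hc2
    · -- M = 3j - a, with j ∈ {a+1, a+2, a+3}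
      have hMf : Mf m a j + a = 3*j := by simp only [Mf]; split_ifs <;> omega
      have hMz : (Mf m a j : ℤ) = 3*(j:ℤ) - (a:ℤ) := by
        have := congrArg (Nat.cast : ℕ → ℤ) hMf; push_cast at this; linarith
      rw [hMz]
      have ht : (0:ℤ) ≤ (2*(a:ℤ)-3*(m:ℤ))*(3*(m:ℤ)+1-2*(a:ℤ)) :=
        mul_nonneg (by linarith) (by linarith)
      have hq : 3*(m:ℤ)*(2*(a:ℤ)) ≤ 3*(m:ℤ)*(3*(m:ℤ)+1) :=
        mul_le_mul_of_nonneg_left h2z (by linarith)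
      have hcase : j = a+1 ∨ j = a+2 ∨ j = a+3 := by omega
      rcases hcase with rfl | rfl | rfl
      · push_cast; nlinarith [ht, hq]
      · push_cast; nlinarith [ht, hq]
      · have h2a : 2*a = 3*m := by omega
        have h2az : 2*(a:ℤ) = 3*(m:ℤ) := by exact_mod_cast h2a
        push_cast; nlinarith [h2az, hq, ht]
    · -- M = 6j + 2a - 9m - 9
      have hMf : Mf m a j + (9*m+9) = 6*j + 2*a := by simp only [Mf]; split_ifs <;> omega
      have hMz : (Mf m a j : ℤ) = 6*(j:ℤ) + 2*(a:ℤ) - 9*(m:ℤ) - 9 := by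
        have := congrArg (Nat.cast : ℕ → ℤ) hMf; push_cast at this; linarith
      rw [hMz]
      have hj3 : 3*(m:ℤ)+4-(a:ℤ) ≤ (j:ℤ) := by
        have h' : 3*m+4 ≤ j + a := by omega
        have := (Nat.cast_le (α := ℤ)).mpr h'; push_cast at this; linarith
      have hj4 : (j:ℤ) ≤ 2*(m:ℤ) := by exact_mod_cast hj2'
      have ht : (0:ℤ) ≤ (2*(a:ℤ)-3*(m:ℤ))*(3*(m:ℤ)+1-2*(a:ℤ)) :=
        mul_nonneg (by linarith) (by linarith)
      have hq : 3*(m:ℤ)*(2*(a:ℤ)) ≤ 3*(m:ℤ)*(3*(m:ℤ)+1) :=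
        mul_le_mul_of_nonneg_left h2z (by linarith)
      have Flo : (0:ℤ) ≤ (9*(m:ℤ)+15-4*(a:ℤ))*(3*(m:ℤ)-10+4*(a:ℤ))
          - (18*(m:ℤ)+6)*(3*(m:ℤ)+4-(a:ℤ)) := by nlinarith [ht, hq]
      have Fhi : (0:ℤ) ≤ (2*(a:ℤ)+3*(m:ℤ)-9)*(9*(m:ℤ)+14-2*(a:ℤ))
          - (36*(m:ℤ)*(m:ℤ)+12*(m:ℤ)) := by nlinarith [ht]
      have hlen : (1:ℤ) ≤ (a:ℤ) - (m:ℤ) - 4 := by linarith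
      have P1 := mul_nonneg (by linarith : (0:ℤ) ≤ 2*(m:ℤ) - (j:ℤ)) Flo
      have P2 := mul_nonneg (by linarith : (0:ℤ) ≤ (j:ℤ) - (3*(m:ℤ)+4-(a:ℤ))) Fhi
      have P3 : (0:ℤ) ≤ ((j:ℤ) - (3*(m:ℤ)+4-(a:ℤ))) * (2*(m:ℤ) - (j:ℤ))
          * ((a:ℤ) - (m:ℤ) - 4) :=
        mul_nonneg (mul_nonneg (by linarith) (by linarith)) (by linarith)
      nlinarith [P1, P2, P3, hlen]
  · rintro ⟨A, hdisj, hcover, hcard, hsum⟩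
    rw [hn] at hcover hsum
    rw [sNK_val] at hsum
    set T : Finset ℕ := Finset.Icc (3*m+1) (6*m+2) with hT
    have hTcard : T.card = 3*m+2 := by rw [hT, Nat.card_Icc]; omega
    have hsub : ∀ i, 1 ≤ i → i ≤ 2*m+1 → A i ⊆ Finset.Icc 1 (6*m+2) := by
      intro i hi1 hi2 x hx
      rw [← hcover]
      exact Finset.mem_biUnion.mpr ⟨i, Finset.mem_Icc.mpr ⟨hi1, hi2⟩, hx⟩
    -- each pair part lies entirely in T
    have hpair : ∀ i, 1 ≤ i → i ≤ a → 2 ≤ (A i ∩ T).card := by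
      intro i hi1 hi2
      have hik : i ≤ 2*m+1 := by omega
      have hci : (A i).card = 2 := by
        rw [hcard i hi1 hik]; simp only [pf]; split_ifs <;> omega
      have hsi : ∑ x ∈ A i, x = 9*m+3 := hsum i hi1 hik
      have hAsub : A i ⊆ T := by
        intro x hx
        have hxn : x ∈ Finset.Icc 1 (6*m+2) := hsub i hi1 hik hx
        rw [Finset.mem_Icc] at hxn
        have her : ((A i).erase x).card = 1 := by
          rw [Finset.card_erase_of_mem hx, hci]
        obtain ⟨y, hy⟩ := Finset.card_eq_one.mp her
        have hyx : y ∈ (A i).erase x := by rw [hy]; exact Finset.mem_singleton_self y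
        have hyA : y ∈ A i := Finset.mem_of_mem_erase hyx
        have hyn : y ∈ Finset.Icc 1 (6*m+2) := hsub i hi1 hik hyA
        rw [Finset.mem_Icc] at hyn
        have hxy : x + y = 9*m+3 := by
          have h0 := Finset.add_sum_erase (A i) (fun z => z) hx
          rw [hy, Finset.sum_singleton] at h0
          simpa [hsi] using h0
        rw [hT, Finset.mem_Icc]
        omega
      rw [Finset.inter_eq_left.mpr hAsub, hci]
    -- each triple part meets T
    have htrip : ∀ i, a < i → i ≤ 3*m+3-a → 1 ≤ (A i ∩ T).card := by
      intro i hi1 hi2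
      have hi1' : 1 ≤ i := by omega
      have hik : i ≤ 2*m+1 := by omega
      have hci : (A i).card = 3 := by
        rw [hcard i hi1' hik]; simp only [pf]; split_ifs <;> omega
      have hsi : ∑ x ∈ A i, x = 9*m+3 := hsum i hi1' hik
      rw [Nat.one_le_iff_ne_zero]
      intro hzero
      have hempty : A i ∩ T = ∅ := Finset.card_eq_zero.mp hzero
      have hbound : ∀ x ∈ A i, x ≤ 3*m := by
        intro x hx
        have hxn : x ∈ Finset.Icc 1 (6*m+2) := hsub i hi1' hik hx
        rw [Finset.mem_Icc] at hxn
        by_contra hgt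
        have : x ∈ A i ∩ T := by
          rw [Finset.mem_inter, hT, Finset.mem_Icc]
          exact ⟨hx, by omega, hxn.2⟩
        rw [hempty] at this
        exact absurd this (Finset.notMem_empty x)
      have h0 := Finset.sum_le_card_nsmul (A i) (fun x => x) (3*m) hbound
      simp only [hsi, hci, smul_eq_mul] at h0
      omega
    -- disjointness of the intersections
    have hd2 : ∀ i ∈ Finset.Icc 1 (2*m+1), ∀ j ∈ Finset.Icc 1 (2*m+1), i ≠ j →
        Disjoint (A i ∩ T) (A j ∩ T) := by
      intro i hi j hj hne
      rw [Finset.mem_Icc] at hi hj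
      rcases lt_or_gt_of_ne hne with h | h
      · exact Disjoint.mono Finset.inter_subset_left Finset.inter_subset_left
          (hdisj i j hi.1 h hj.2)
      · exact (Disjoint.mono Finset.inter_subset_left Finset.inter_subset_left
          (hdisj j i hj.1 h hi.2)).symm
    have hUB : ∑ i ∈ Finset.Icc 1 (2*m+1), (A i ∩ T).card ≤ 3*m+2 := by
      rw [← Finset.card_biUnion hd2, ← hTcard]
      apply Finset.card_le_card
      intro x hx
      obtain ⟨i, _, hxi⟩ := Finset.mem_biUnion.mp hx
      exact (Finset.mem_inter.mp hxi).2
    have hLB : 3*m+3 ≤ ∑ i ∈ Finset.Icc 1 (2*m+1), (A i ∩ T).card := by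
      have hIcc : Finset.Icc 1 (2*m+1) = Finset.Ioc 0 (2*m+1) := by
        ext x; simp [Nat.lt_iff_add_one_le]
      have hsplit : (∑ i ∈ Finset.Ioc 0 a, (A i ∩ T).card)
          + (∑ i ∈ Finset.Ioc a (3*m+3-a), (A i ∩ T).card)
          = ∑ i ∈ Finset.Ioc 0 (3*m+3-a), (A i ∩ T).card :=
        Finset.sum_Ioc_consecutive _ (by omega) (by omega)
      have hA1 : 2*a ≤ ∑ i ∈ Finset.Ioc 0 a, (A i ∩ T).card := by
        calc 2*a = ∑ _i ∈ Finset.Ioc 0 a, 2 := by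
              rw [Finset.sum_const, smul_eq_mul, Nat.card_Ioc]; omega
          _ ≤ _ := Finset.sum_le_sum (fun i hi => by
              rw [Finset.mem_Ioc] at hi; exact hpair i hi.1 hi.2)
      have hA2 : 3*m+3-2*a ≤ ∑ i ∈ Finset.Ioc a (3*m+3-a), (A i ∩ T).card := by
        calc 3*m+3-2*a = ∑ _i ∈ Finset.Ioc a (3*m+3-a), 1 := by
              rw [Finset.sum_const, smul_eq_mul, Nat.card_Ioc]; omega
          _ ≤ _ := Finset.sum_le_sum (fun i hi => by
              rw [Finset.mem_Ioc] at hi; exact htrip i hi.1 hi.2)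
      have hmono : ∑ i ∈ Finset.Ioc 0 (3*m+3-a), (A i ∩ T).card
          ≤ ∑ i ∈ Finset.Icc 1 (2*m+1), (A i ∩ T).card := by
        rw [hIcc]
        apply Finset.sum_le_sum_of_subset
        apply Finset.Ioc_subset_Ioc le_rfl
        omega
      omega
    omega
end
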